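/- The ordering ≺₁ is a subrelation of the ordering ≺₀: for all terms s, t over the signature, if s ≺₁ t then s ≺₀ t. -/
import Mathlib


/-- Terms over variables `V`, constructors `C` (constants and unary symbols),
and defined function symbols `D` (arity given by the argument list). -/
inductive Tm (V C D : Type) : Type where
  | var : V → Tm V C D
  | cnst : C → Tm V C D
  | succ : C → Tm V C D → Tm V C D
  | fn : D → List (Tm V C D) → Tm V C D

/-- A default term, used for list indexing. -/
def dflt {V C D : Type} [Inhabited C] : Tm V C D := .cnst default

/-- Strict precedence induced by the pre-order `precLe` on `D`. -/
def precLt {D : Type} (precLe : D → D → Prop) (g f : D) : Prop :=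
  precLe g f ∧ ¬ precLe f g

/-- Equivalence induced by the pre-order `precLe` on `D`. -/
def eqD {D : Type} (precLe : D → D → Prop) (g f : D) : Prop :=
  precLe g f ∧ precLe f g

/-- `Below precLe f s` : the term `s` lies in `T(C ∪ D↾f, V)`, i.e. every
defined symbol occurring in `s` is strictly below `f` in the precedence. -/
inductive Below {V C D : Type} (precLe : D → D → Prop) (f : D) :
    Tm V C D → Prop where
  | var (x : V) : Below precLe f (.var x)
  | cnst (b : C) : Below precLe f (.cnst b)
  | succ (c : C) {t : Tm V C D} : Below precLe f t → Below precLe f (.succ c t)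
  | fn {g : D} {ts : List (Tm V C D)} : precLt precLe g f →
      (∀ t ∈ ts, Below precLe f t) → Below precLe f (.fn g ts)

/-- The ordering `≺₁`, with precedence `precLe` on `D` and valencies `nu`
(`nu f i = true` meaning `ν(f,i) = 1`).  Clauses (paired constructors realise
`⪯₁ = ≺₁ ∪ =`): (1) if `s ⪯₁ t` and `c ∈ C` then `s ≺₁ c(t)`; (2) if `c ∈ C`
and `s ≺₁ f(t⃗)` then `c(s) ≺₁ f(t⃗)`; (3) if `s ⪯₁ tᵢ` and `ν(f,i)=1` then
`s ≺₁ f(…,tᵢ,…)`; (4) if `g ≺_D f` and `sᵢ ≺₁ f(t⃗)` for all `i` then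
`g(s⃗) ≺₁ f(t⃗)`. -/
inductive Lt1 {V C D : Type} [Inhabited C] (precLe : D → D → Prop)
    (nu : D → ℕ → Bool) : Tm V C D → Tm V C D → Prop where
  | succ_eq (c : C) (t : Tm V C D) : Lt1 precLe nu t (.succ c t)
  | succ_lt (c : C) {s t : Tm V C D} :
      Lt1 precLe nu s t → Lt1 precLe nu s (.succ c t)
  | cons_left (c : C) {s : Tm V C D} {f : D} {ts : List (Tm V C D)} :
      Lt1 precLe nu s (.fn f ts) → Lt1 precLe nu (.succ c s) (.fn f ts)
  | arg_eq (f : D) (ts : List (Tm V C D)) (i : ℕ) :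
      i < ts.length → nu f i = true → Lt1 precLe nu (ts.getD i dflt) (.fn f ts)
  | arg_lt (f : D) (ts : List (Tm V C D)) (i : ℕ) {s : Tm V C D} :
      i < ts.length → nu f i = true → Lt1 precLe nu s (ts.getD i dflt) →
      Lt1 precLe nu s (.fn f ts)
  | prec {g f : D} {ss ts : List (Tm V C D)} : precLt precLe g f →
      (∀ s ∈ ss, Lt1 precLe nu s (.fn f ts)) →
      Lt1 precLe nu (.fn g ss) (.fn f ts)

/-- The ordering `≺₀` of the light lexicographic path ordering.  Clauses
(paired constructors realise `⪯₀ = ≺₀ ∪ =`): (1) if `s ⪯₀ t` and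
`f ∈ C ∪ D` then `s ≺₀ f(…,t,…)`; (2) if `c ∈ C` and `s ≺₀ f(t⃗)` then
`c(s) ≺₀ f(t⃗)`; (3) if `g ≺_D f` and `sᵢ ≺_{ν(g,i)} f(t⃗)` for all `i`, then
`g(s⃗) ≺₀ f(t⃗)`; (4) if `g ≈_D f`, `s₁ = t₁, …, s_{p-1} = t_{p-1}`,
`s_p ≺₁ t_p` with `ν(f,p)=1`, and for all later positions `j` either
`s_j ⪯₁ t_j` with `ν(f,j)=1`, or `s_j ∈ T(C ∪ D↾f, V)`, `s_j ≺₀ f(t⃗)` and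
`ν(f,j)=0`, then `g(s⃗) ≺₀ f(t⃗)`. -/
inductive Lt0 {V C D : Type} [Inhabited C] (precLe : D → D → Prop)
    (nu : D → ℕ → Bool) : Tm V C D → Tm V C D → Prop where
  | succ_eq (c : C) (t : Tm V C D) : Lt0 precLe nu t (.succ c t)
  | succ_lt (c : C) {s t : Tm V C D} :
      Lt0 precLe nu s t → Lt0 precLe nu s (.succ c t)
  | arg_eq (f : D) (ts : List (Tm V C D)) (i : ℕ) :
      i < ts.length → Lt0 precLe nu (ts.getD i dflt) (.fn f ts)
  | arg_lt (f : D) (ts : List (Tm V C D)) (i : ℕ) {s : Tm V C D} :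
      i < ts.length → Lt0 precLe nu s (ts.getD i dflt) →
      Lt0 precLe nu s (.fn f ts)
  | cons_left (c : C) {s : Tm V C D} {f : D} {ts : List (Tm V C D)} :
      Lt0 precLe nu s (.fn f ts) → Lt0 precLe nu (.succ c s) (.fn f ts)
  | prec {g f : D} {ss ts : List (Tm V C D)} : precLt precLe g f →
      (∀ i, i < ss.length → nu g i = true →
        Lt1 precLe nu (ss.getD i dflt) (.fn f ts)) →
      (∀ i, i < ss.length → nu g i = false →
        Lt0 precLe nu (ss.getD i dflt) (.fn f ts)) →
      Lt0 precLe nu (.fn g ss) (.fn f ts)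
  | lex {g f : D} {ss ts : List (Tm V C D)} (p : ℕ) : eqD precLe g f →
      ss.length = ts.length → p < ts.length → nu f p = true →
      (∀ i, i < p → ss.getD i dflt = ts.getD i dflt) →
      Lt1 precLe nu (ss.getD p dflt) (ts.getD p dflt) →
      (∀ j, p < j → j < ts.length → nu f j = true →
        ss.getD j dflt = ts.getD j dflt ∨
          Lt1 precLe nu (ss.getD j dflt) (ts.getD j dflt)) →
      (∀ j, p < j → j < ts.length → nu f j = false →
        Below precLe f (ss.getD j dflt)) →
      (∀ j, p < j → j < ts.length → nu f j = false →
        Lt0 precLe nu (ss.getD j dflt) (.fn f ts)) →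
      Lt0 precLe nu (.fn g ss) (.fn f ts)

/-- The ordering `≺₁` is a subrelation of `≺₀`: if `s ≺₁ t` then `s ≺₀ t`
(with `precLe` a total pre-order on `D`). -/
theorem stmt_8 {V C D : Type} [Inhabited C] (precLe : D → D → Prop)
    (htrans : Transitive precLe) (htot : ∀ f g, precLe f g ∨ precLe g f)
    (nu : D → ℕ → Bool) (s t : Tm V C D) (h : Lt1 precLe nu s t) :
    Lt0 precLe nu s t := by
  induction h with
  | succ_eq c t => exact Lt0.succ_eq c t
  | succ_lt c _ ih => exact Lt0.succ_lt c ih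
  | cons_left c _ ih => exact Lt0.cons_left c ih
  | arg_eq f ts i hi _ => exact Lt0.arg_eq f ts i hi
  | arg_lt f ts i hi _ _ ih => exact Lt0.arg_lt f ts i hi ih
  | prec hlt _ ih =>
    refine Lt0.prec hlt (fun i hi _ => ?_) (fun i hi _ => ?_)
    · rename_i hall _
      exact hall _ (by rw [List.getD_eq_getElem _ _ hi]; exact List.getElem_mem hi)
    · exact ih _ (by rw [List.getD_eq_getElem _ _ hi]; exact List.getElem_mem hi)
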